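/- Comparison of good filtrations implies Bernstein-Sato type inclusion formally: suppose V and V̄ are two ℤ^p-indexed filtrations of a module M with V_w(M) ⊆ V̄_w(M) ⊆ V_{w+κ}(M) for some κ ∈ ℕ^p and all w ∈ ℤ^p, and suppose for each L in a finite set S of linear forms with nonnegative integer coefficients there is a nonzero polynomial b_L in one variable and an operator θ such that b_L(L(θ) - k)·V^L_k(M) ⊆ V^L_{k-1}(M) for all k ∈ ℤ, where V^L_k(M) = Σ_{L(w)≤k} V_w(M) and V̄_w(M) = ⋂_{L∈S} V^L_{L(w)}(M). Then for any v ∈ ℕ^p and δ ∈ V_0(M), the element b(θ)·δ lies in V_{-v}(M), where b(s) = Π_{L∈S} Π_{-L(v+κ)<k≤0} b_L(L(s)-k). -/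
import Mathlib


open Polynomial Finset

/-- `V^L_k(M) = Σ_{L(w) ≤ k} V_w(M)` for `L ∈ ℕ^p`. -/
def VLfilt {p : ℕ} {M : Type*} [AddCommGroup M] [Module ℂ M]
    (V : (Fin p → ℤ) → Submodule ℂ M) (L : Fin p → ℕ) (k : ℤ) : Submodule ℂ M :=
  ⨆ w : {w : Fin p → ℤ // ∑ i, (L i : ℤ) * w i ≤ k}, V w

/-- `L(θ) = Σ l_j θ_j`. -/
def Ltheta {p : ℕ} {M : Type*} [AddCommGroup M] [Module ℂ M]
    (θ : Fin p → Module.End ℂ M) (L : Fin p → ℕ) : Module.End ℂ M :=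
  ∑ i, (L i : ℂ) • θ i

/-- The endomorphism `b_L(L(θ) - k)`. -/
noncomputable def eOp {p : ℕ} {M : Type*} [AddCommGroup M] [Module ℂ M]
    (θ : Fin p → Module.End ℂ M) (b : Polynomial ℂ) (L : Fin p → ℕ) (k : ℤ) :
    Module.End ℂ M :=
  Polynomial.aeval (Ltheta θ L) (b.comp (X - C (k : ℂ)))

/-- Endomorphisms preserving a submodule form a submonoid. -/
def presMonoid {M : Type*} [AddCommGroup M] [Module ℂ M] (N : Submodule ℂ M) :
    Submonoid (Module.End ℂ M) where
  carrier := {f | ∀ x ∈ N, f x ∈ N}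
  one_mem' := fun _ hx => hx
  mul_mem' := fun hf hg x hx => hf _ (hg x hx)

lemma pow_pres {M : Type*} [AddCommGroup M] [Module ℂ M] {N : Submodule ℂ M}
    {f : Module.End ℂ M} (hf : ∀ x ∈ N, f x ∈ N) (n : ℕ) :
    ∀ x ∈ N, (f ^ n) x ∈ N := by
  induction n with
  | zero => simpa using fun x hx => hx
  | succ n ih =>
      intro x hx
      rw [pow_succ, Module.End.mul_apply]
      exact ih _ (hf x hx)

lemma aeval_pres {M : Type*} [AddCommGroup M] [Module ℂ M] {N : Submodule ℂ M}
    {f : Module.End ℂ M} (hf : ∀ x ∈ N, f x ∈ N) (P : Polynomial ℂ) :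
    ∀ x ∈ N, (Polynomial.aeval f P) x ∈ N := by
  induction P using Polynomial.induction_on' with
  | add P Q hP hQ =>
      intro x hx
      rw [map_add, LinearMap.add_apply]
      exact N.add_mem (hP x hx) (hQ x hx)
  | monomial n a =>
      intro x hx
      rw [Polynomial.aeval_monomial, Module.End.mul_apply, Module.algebraMap_end_apply]
      exact N.smul_mem _ (pow_pres hf n x hx)

theorem bernstein_sato_inclusion (p : ℕ) (M : Type*) [AddCommGroup M] [Module ℂ M]
    (S : Finset (Fin p → ℕ))
    (V Vbar : (Fin p → ℤ) → Submodule ℂ M)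
    (κ v : Fin p → ℕ)
    (θ : Fin p → Module.End ℂ M)
    (hθcomm : ∀ i j, Commute (θ i) (θ j))
    (b : (Fin p → ℕ) → Polynomial ℂ)
    (hbne : ∀ L ∈ S, b L ≠ 0)
    (hVV : ∀ w, V w ≤ Vbar w ∧ Vbar w ≤ V (fun i => w i + (κ i : ℤ)))
    (hVbar : ∀ w, Vbar w = ⨅ L ∈ S, VLfilt V L (∑ i, (L i : ℤ) * w i))
    (hpres : ∀ L ∈ S, ∀ k : ℤ, ∀ i, (VLfilt V L k).map (θ i) ≤ VLfilt V L k)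
    (hdesc : ∀ L ∈ S, ∀ k : ℤ, (VLfilt V L k).map (eOp θ (b L) L k) ≤ VLfilt V L (k - 1))
    (hcomm : ∀ L ∈ S, ∀ L' ∈ S, ∀ P Q : Polynomial ℂ,
      Commute (Polynomial.aeval (Ltheta θ L) P) (Polynomial.aeval (Ltheta θ L') Q))
    (δ : M) (hδ : δ ∈ V 0) :
    (S.noncommProd
        (fun L => Polynomial.aeval (Ltheta θ L)
          (∏ k ∈ Finset.Ioc (-(∑ i, (L i : ℤ) * ((v i : ℤ) + (κ i : ℤ)))) 0,
            (b L).comp (X - C (k : ℂ))))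
        (fun L hL L' hL' _ => hcomm L hL L' hL' _ _)) δ
      ∈ V (fun i => -(v i : ℤ)) := by
  classical
  -- θ i preserves each VLfilt V L k for L ∈ S
  have hθpres : ∀ L ∈ S, ∀ k : ℤ, ∀ i, ∀ x ∈ VLfilt V L k, θ i x ∈ VLfilt V L k := by
    intro L hL k i x hx
    exact hpres L hL k i (Submodule.mem_map_of_mem hx)
  -- hence Ltheta θ L' preserves VLfilt V L k for any L'
  have hLtheta : ∀ L ∈ S, ∀ k : ℤ, ∀ L' : Fin p → ℕ, ∀ x ∈ VLfilt V L k,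
      Ltheta θ L' x ∈ VLfilt V L k := by
    intro L hL k L' x hx
    rw [Ltheta, LinearMap.sum_apply]
    exact Submodule.sum_mem _ fun i _ => by
      rw [LinearMap.smul_apply]
      exact Submodule.smul_mem _ _ (hθpres L hL k i x hx)
  have hpoly : ∀ L ∈ S, ∀ k : ℤ, ∀ (L' : Fin p → ℕ) (P : Polynomial ℂ),
      ∀ x ∈ VLfilt V L k, (Polynomial.aeval (Ltheta θ L') P) x ∈ VLfilt V L k :=
    fun L hL k L' P => aeval_pres (hLtheta L hL k L') P
  -- descent lemma
  have hdescend : ∀ L ∈ S, ∀ (m : ℤ) (c : ℕ), ∀ x ∈ VLfilt V L m,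
      (Polynomial.aeval (Ltheta θ L)
        (∏ k ∈ Finset.Ioc (m - (c : ℤ)) m, (b L).comp (X - C (k : ℂ)))) x
      ∈ VLfilt V L (m - c) := by
    intro L hL m c
    induction c with
    | zero => intro x hx; simpa using hx
    | succ c ih =>
        intro x hx
        have hIoc : Finset.Ioc (m - ((c : ℤ) + 1)) m
            = insert (m - (c : ℤ)) (Finset.Ioc (m - (c : ℤ)) m) := by
          ext y; simp only [Finset.mem_Ioc, Finset.mem_insert]; omega
        have hnm : (m - (c : ℤ)) ∉ Finset.Ioc (m - (c : ℤ)) m := by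
          simp
        push_cast
        rw [hIoc, Finset.prod_insert hnm, map_mul, Module.End.mul_apply]
        have h1 := ih x hx
        have h2 := hdesc L hL (m - (c : ℤ)) (Submodule.mem_map_of_mem h1)
        rw [eOp] at h2
        convert h2 using 2
        ring
  -- δ ∈ VLfilt V L 0 for each L
  have hδ0 : ∀ L : Fin p → ℕ, δ ∈ VLfilt V L 0 := by
    intro L
    refine Submodule.mem_iSup_of_mem ⟨0, by simp⟩ ?_
    exact hδ
  set f : (Fin p → ℕ) → Module.End ℂ M := fun L => Polynomial.aeval (Ltheta θ L)
      (∏ k ∈ Finset.Ioc (-(∑ i, (L i : ℤ) * ((v i : ℤ) + (κ i : ℤ)))) 0,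
        (b L).comp (X - C (k : ℂ))) with hf
  -- main membership claim for each L ∈ S
  have hmain : ∀ L ∈ S,
      (S.noncommProd f (fun L hL L' hL' _ => hcomm L hL L' hL' _ _)) δ
        ∈ VLfilt V L (-(∑ i, (L i : ℤ) * ((v i : ℤ) + (κ i : ℤ)))) := by
    intro L hL
    set cL : ℤ := ∑ i, (L i : ℤ) * ((v i : ℤ) + (κ i : ℤ)) with hcL
    have hcLnn : 0 ≤ cL := Finset.sum_nonneg fun i _ => by positivity
    rw [← Finset.noncommProd_erase_mul S hL f (fun L hL L' hL' _ => hcomm L hL L' hL' _ _),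
      Module.End.mul_apply]
    have hfLδ : f L δ ∈ VLfilt V L (-cL) := by
      have := hdescend L hL 0 cL.toNat δ (hδ0 L)
      rw [Int.toNat_of_nonneg hcLnn] at this
      simpa [hf] using this
    -- the rest preserves VLfilt V L (-cL)
    have hrest : (S.erase L).noncommProd f
        (fun L hL L' hL' _ => hcomm L (S.mem_of_mem_erase hL) L' (S.mem_of_mem_erase hL') _ _)
        ∈ presMonoid (VLfilt V L (-cL)) := by
      refine Submonoid.noncommProd_mem _ _ _ _ ?_
      intro L' _
      exact fun x hx => hpoly L hL (-cL) L' _ x hx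
    exact hrest _ hfLδ
  -- conclude via Vbar
  set w : Fin p → ℤ := fun i => -((v i : ℤ) + (κ i : ℤ)) with hw
  have hmem : (S.noncommProd f (fun L hL L' hL' _ => hcomm L hL L' hL' _ _)) δ ∈ Vbar w := by
    rw [hVbar w]
    rw [Submodule.mem_iInf]
    intro L
    rw [Submodule.mem_iInf]
    intro hL
    have : ∑ i, (L i : ℤ) * w i = -(∑ i, (L i : ℤ) * ((v i : ℤ) + (κ i : ℤ))) := by
      rw [← Finset.sum_neg_distrib]
      exact Finset.sum_congr rfl fun i _ => by rw [hw]; ring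
    rw [this]
    exact hmain L hL
  have hfin := (hVV w).2 hmem
  have : (fun i => w i + (κ i : ℤ)) = fun i => -(v i : ℤ) := by
    funext i; rw [hw]; ring
  rwa [this] at hfin
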